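/- For all real numbers x₁ > 0, x₂ > 0 and every natural number N, ∑_{(d₁,d₂) ∈ ℕ², d₁ + d₂ ≤ N} (d₁ + d₂)² · x₁^{2d₁} · x₂^{2d₂} / ((2d₁+1)! · (2d₂+1)!) ≤ (x₁² + x₂²) · sinh(x₁) · sinh(x₂) / (x₁ · x₂). -/

import Mathlib

open Finset Real

private lemma partial_sinh (x : ℝ) (hx : 0 < x) (M : ℕ) :
    ∑ d ∈ Finset.range M, x ^ (2 * d) / (Nat.factorial (2 * d + 1) : ℝ)
      ≤ Real.sinh x / x := by
  rw [le_div_iff₀ hx]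
  have : (∑ d ∈ Finset.range M, x ^ (2 * d) / (Nat.factorial (2 * d + 1) : ℝ)) * x
      = ∑ d ∈ Finset.range M, x ^ (2 * d + 1) / (Nat.factorial (2 * d + 1) : ℝ) := by
    rw [Finset.sum_mul]
    refine Finset.sum_congr rfl fun d _ => ?_
    rw [pow_succ]; ring
  rw [this]
  exact sum_le_hasSum _ (fun d _ => by positivity) (Real.hasSum_sinh x)

private lemma shifted_sum (x : ℝ) (hx : 0 < x) (N : ℕ) :
    ∑ d ∈ Finset.range (N + 1),
        ((2 * d * (2 * d + 1) : ℕ) : ℝ) * (x ^ (2 * d) / (Nat.factorial (2 * d + 1) : ℝ))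
      ≤ x * Real.sinh x := by
  have key : ∀ e : ℕ,
      ((2 * (e + 1) * (2 * (e + 1) + 1) : ℕ) : ℝ) *
        (x ^ (2 * (e + 1)) / (Nat.factorial (2 * (e + 1) + 1) : ℝ))
      = x ^ 2 * (x ^ (2 * e) / (Nat.factorial (2 * e + 1) : ℝ)) := by
    intro e
    have hfac : (Nat.factorial (2 * (e + 1) + 1) : ℝ)
        = ((2 * (e + 1) * (2 * (e + 1) + 1) : ℕ) : ℝ) * (Nat.factorial (2 * e + 1) : ℝ) := by
      have : 2 * (e + 1) + 1 = (2 * e + 1) + 1 + 1 := by ring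
      rw [this, Nat.factorial_succ, Nat.factorial_succ]
      push_cast; ring
    have hpow : x ^ (2 * (e + 1)) = x ^ 2 * x ^ (2 * e) := by
      rw [← pow_add]; ring_nf
    have hne : ((2 * (e + 1) * (2 * (e + 1) + 1) : ℕ) : ℝ) ≠ 0 := by positivity
    have hne2 : (Nat.factorial (2 * e + 1) : ℝ) ≠ 0 := by
      exact_mod_cast (Nat.factorial_pos _).ne'
    rw [hfac, hpow]
    field_simp
  rw [Finset.sum_range_succ']
  simp only [key]
  rw [← Finset.mul_sum]
  simp only [Nat.mul_zero, Nat.zero_mul, Nat.cast_zero, zero_mul, add_zero]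
  calc x ^ 2 * ∑ e ∈ Finset.range N, x ^ (2 * e) / (Nat.factorial (2 * e + 1) : ℝ)
      ≤ x ^ 2 * (Real.sinh x / x) := by
        have := partial_sinh x hx N
        nlinarith [sq_nonneg x]
    _ = x * Real.sinh x := by field_simp

/-- For positive reals `x₁, x₂` and any `N`,
`∑_{d₁+d₂ ≤ N} (d₁+d₂)² x₁^{2d₁} x₂^{2d₂} / ((2d₁+1)!(2d₂+1)!)
  ≤ (x₁² + x₂²) sinh(x₁) sinh(x₂) / (x₁ x₂)`. -/
theorem taylor_tail_bound (x₁ x₂ : ℝ) (h1 : 0 < x₁) (h2 : 0 < x₂) (N : ℕ) :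
    (∑ d₁ ∈ Finset.range (N + 1), ∑ d₂ ∈ Finset.range (N + 1 - d₁),
        ((d₁ + d₂ : ℕ) : ℝ) ^ 2 * x₁ ^ (2 * d₁) * x₂ ^ (2 * d₂) /
          ((Nat.factorial (2 * d₁ + 1) : ℝ) * (Nat.factorial (2 * d₂ + 1) : ℝ))) ≤
      (x₁ ^ 2 + x₂ ^ 2) * Real.sinh x₁ * Real.sinh x₂ / (x₁ * x₂) := by
  set a : ℕ → ℝ := fun d => x₁ ^ (2 * d) / (Nat.factorial (2 * d + 1) : ℝ) with ha
  set b : ℕ → ℝ := fun d => x₂ ^ (2 * d) / (Nat.factorial (2 * d + 1) : ℝ) with hb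
  have hanneg : ∀ d, 0 ≤ a d := fun d => by positivity
  have hbnneg : ∀ d, 0 ≤ b d := fun d => by positivity
  have hterm : ∀ d₁ d₂ : ℕ,
      ((d₁ + d₂ : ℕ) : ℝ) ^ 2 * x₁ ^ (2 * d₁) * x₂ ^ (2 * d₂) /
          ((Nat.factorial (2 * d₁ + 1) : ℝ) * (Nat.factorial (2 * d₂ + 1) : ℝ))
        = ((d₁ + d₂ : ℕ) : ℝ) ^ 2 * (a d₁ * b d₂) := by
    intro d₁ d₂
    simp only [ha, hb]
    field_simp
  -- step 1: triangular sum ≤ rectangular sum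
  have step1 :
      (∑ d₁ ∈ Finset.range (N + 1), ∑ d₂ ∈ Finset.range (N + 1 - d₁),
          ((d₁ + d₂ : ℕ) : ℝ) ^ 2 * x₁ ^ (2 * d₁) * x₂ ^ (2 * d₂) /
            ((Nat.factorial (2 * d₁ + 1) : ℝ) * (Nat.factorial (2 * d₂ + 1) : ℝ)))
      ≤ ∑ d₁ ∈ Finset.range (N + 1), ∑ d₂ ∈ Finset.range (N + 1),
          ((d₁ + d₂ : ℕ) : ℝ) ^ 2 * (a d₁ * b d₂) := by
    refine Finset.sum_le_sum fun d₁ _ => ?_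
    calc ∑ d₂ ∈ Finset.range (N + 1 - d₁),
          ((d₁ + d₂ : ℕ) : ℝ) ^ 2 * x₁ ^ (2 * d₁) * x₂ ^ (2 * d₂) /
            ((Nat.factorial (2 * d₁ + 1) : ℝ) * (Nat.factorial (2 * d₂ + 1) : ℝ))
        = ∑ d₂ ∈ Finset.range (N + 1 - d₁), ((d₁ + d₂ : ℕ) : ℝ) ^ 2 * (a d₁ * b d₂) := by
          exact Finset.sum_congr rfl fun d₂ _ => hterm d₁ d₂
      _ ≤ ∑ d₂ ∈ Finset.range (N + 1), ((d₁ + d₂ : ℕ) : ℝ) ^ 2 * (a d₁ * b d₂) := by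
          refine Finset.sum_le_sum_of_subset_of_nonneg
            (Finset.range_subset_range.2 (by omega)) fun d₂ _ _ => ?_
          have := hanneg d₁; have := hbnneg d₂
          positivity
  -- step 2: pointwise bound and factorization
  have step2 :
      (∑ d₁ ∈ Finset.range (N + 1), ∑ d₂ ∈ Finset.range (N + 1),
          ((d₁ + d₂ : ℕ) : ℝ) ^ 2 * (a d₁ * b d₂))
      ≤ (∑ d₁ ∈ Finset.range (N + 1), ((2 * d₁ * (2 * d₁ + 1) : ℕ) : ℝ) * a d₁) *
          (∑ d₂ ∈ Finset.range (N + 1), b d₂)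
        + (∑ d₁ ∈ Finset.range (N + 1), a d₁) *
          (∑ d₂ ∈ Finset.range (N + 1), ((2 * d₂ * (2 * d₂ + 1) : ℕ) : ℝ) * b d₂) := by
    have expand :
        (∑ d₁ ∈ Finset.range (N + 1), ((2 * d₁ * (2 * d₁ + 1) : ℕ) : ℝ) * a d₁) *
            (∑ d₂ ∈ Finset.range (N + 1), b d₂)
          + (∑ d₁ ∈ Finset.range (N + 1), a d₁) *
            (∑ d₂ ∈ Finset.range (N + 1), ((2 * d₂ * (2 * d₂ + 1) : ℕ) : ℝ) * b d₂)
        = ∑ d₁ ∈ Finset.range (N + 1), ∑ d₂ ∈ Finset.range (N + 1),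
            (((2 * d₁ * (2 * d₁ + 1) : ℕ) : ℝ) + ((2 * d₂ * (2 * d₂ + 1) : ℕ) : ℝ))
              * (a d₁ * b d₂) := by
      rw [Finset.sum_mul_sum, Finset.sum_mul_sum, ← Finset.sum_add_distrib]
      refine Finset.sum_congr rfl fun d₁ _ => ?_
      rw [← Finset.sum_add_distrib]
      exact Finset.sum_congr rfl fun d₂ _ => by ring
    rw [expand]
    refine Finset.sum_le_sum fun d₁ _ => Finset.sum_le_sum fun d₂ _ => ?_
    have hnat : ((d₁ + d₂) ^ 2 : ℕ) ≤ 2 * d₁ * (2 * d₁ + 1) + 2 * d₂ * (2 * d₂ + 1) := by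
      nlinarith [sq_nonneg (d₁ - d₂ : ℤ), sq_nonneg (d₁ + d₂ : ℤ)]
    have hcast : ((d₁ + d₂ : ℕ) : ℝ) ^ 2
        ≤ ((2 * d₁ * (2 * d₁ + 1) : ℕ) : ℝ) + ((2 * d₂ * (2 * d₂ + 1) : ℕ) : ℝ) := by
      calc ((d₁ + d₂ : ℕ) : ℝ) ^ 2 = (((d₁ + d₂) ^ 2 : ℕ) : ℝ) := by push_cast; ring
        _ ≤ _ := by exact_mod_cast hnat
    have hab : 0 ≤ a d₁ * b d₂ := mul_nonneg (hanneg d₁) (hbnneg d₂)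
    exact mul_le_mul_of_nonneg_right hcast hab
  -- assemble
  have hA := partial_sinh x₁ h1 (N + 1)
  have hB := partial_sinh x₂ h2 (N + 1)
  have hA' := shifted_sum x₁ h1 N
  have hB' := shifted_sum x₂ h2 N
  have hApos : (0:ℝ) ≤ ∑ d ∈ Finset.range (N + 1), a d :=
    Finset.sum_nonneg fun d _ => hanneg d
  have hBpos : (0:ℝ) ≤ ∑ d ∈ Finset.range (N + 1), b d :=
    Finset.sum_nonneg fun d _ => hbnneg d
  have hAs : (0:ℝ) ≤ ∑ d₁ ∈ Finset.range (N + 1), ((2 * d₁ * (2 * d₁ + 1) : ℕ) : ℝ) * a d₁ :=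
    Finset.sum_nonneg fun d _ => mul_nonneg (by positivity) (hanneg d)
  have hBs : (0:ℝ) ≤ ∑ d₂ ∈ Finset.range (N + 1), ((2 * d₂ * (2 * d₂ + 1) : ℕ) : ℝ) * b d₂ :=
    Finset.sum_nonneg fun d _ => mul_nonneg (by positivity) (hbnneg d)
  have hsinh1 : 0 < Real.sinh x₁ := Real.sinh_pos_iff.2 h1
  have hsinh2 : 0 < Real.sinh x₂ := Real.sinh_pos_iff.2 h2
  have step3 :
      (∑ d₁ ∈ Finset.range (N + 1), ((2 * d₁ * (2 * d₁ + 1) : ℕ) : ℝ) * a d₁) *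
          (∑ d₂ ∈ Finset.range (N + 1), b d₂)
        + (∑ d₁ ∈ Finset.range (N + 1), a d₁) *
          (∑ d₂ ∈ Finset.range (N + 1), ((2 * d₂ * (2 * d₂ + 1) : ℕ) : ℝ) * b d₂)
      ≤ (x₁ * Real.sinh x₁) * (Real.sinh x₂ / x₂)
        + (Real.sinh x₁ / x₁) * (x₂ * Real.sinh x₂) := by
    have h1' : (∑ d₁ ∈ Finset.range (N + 1), ((2 * d₁ * (2 * d₁ + 1) : ℕ) : ℝ) * a d₁) *
          (∑ d₂ ∈ Finset.range (N + 1), b d₂) ≤ (x₁ * Real.sinh x₁) * (Real.sinh x₂ / x₂) :=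
      mul_le_mul hA' hB hBpos (by positivity)
    have h2' : (∑ d₁ ∈ Finset.range (N + 1), a d₁) *
          (∑ d₂ ∈ Finset.range (N + 1), ((2 * d₂ * (2 * d₂ + 1) : ℕ) : ℝ) * b d₂)
        ≤ (Real.sinh x₁ / x₁) * (x₂ * Real.sinh x₂) :=
      mul_le_mul hA hB' hBs (by positivity)
    linarith
  have final : (x₁ * Real.sinh x₁) * (Real.sinh x₂ / x₂)
        + (Real.sinh x₁ / x₁) * (x₂ * Real.sinh x₂)
      = (x₁ ^ 2 + x₂ ^ 2) * Real.sinh x₁ * Real.sinh x₂ / (x₁ * x₂) := by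
    field_simp
  linarith [step1, step2, step3]
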